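/- arXiv:1212.4326 — 8 statements merged into one kernel-verified Lean document; each statement's English description precedes it below -/
import Mathlib

section
/- In ℝ² with the Euclidean distance, the family {U₁, U₂} with U₁ = {(x₁,x₂) : x₂ > -x₁², x₁ > 0} and U₂ = {(x₁,x₂) : x₂ < x₁², x₁ > 0} is not 1-regularly situated: there is no constant C > 0 such that d(x, ℝ²\(U₁∪U₂)) ≤ C·max(d(x, ℝ²\U₁), d(x, ℝ²\U₂)) for all x ∈ ℝ². Specifically, for x = (t, 0) with t > 0, d(x, ℝ²\(U₁∪U₂)) = t while d(x, ℝ²\Uᵢ) ≤ t² for i = 1,2. -/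
open Metric

/-- The open set `U₁ = {x₂ > -x₁², x₁ > 0}` in `ℝ²`. -/
def U₁ : Set (EuclideanSpace ℝ (Fin 2)) := {p | -(p 0) ^ 2 < p 1 ∧ 0 < p 0}
/-- The open set `U₂ = {x₂ < x₁², x₁ > 0}` in `ℝ²`. -/
def U₂ : Set (EuclideanSpace ℝ (Fin 2)) := {p | p 1 < (p 0) ^ 2 ∧ 0 < p 0}
/-- The point `(t, 0)` of `ℝ²`. -/
noncomputable def pt (t : ℝ) : EuclideanSpace ℝ (Fin 2) := (WithLp.equiv 2 (Fin 2 → ℝ)).symm ![t, 0]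

noncomputable def pt2 (a b : ℝ) : EuclideanSpace ℝ (Fin 2) := (WithLp.equiv 2 (Fin 2 → ℝ)).symm ![a, b]

lemma pt2_app0 (a b : ℝ) : pt2 a b 0 = a := rfl
lemma pt2_app1 (a b : ℝ) : pt2 a b 1 = b := rfl
lemma pt_eq (t : ℝ) : pt t = pt2 t 0 := rfl

lemma dist_pt2 (a b c d : ℝ) : dist (pt2 a b) (pt2 c d) = Real.sqrt ((a - c) ^ 2 + (b - d) ^ 2) := by
  rw [EuclideanSpace.dist_eq]
  congr 1
  rw [Fin.sum_univ_two]
  simp [pt2_app0, pt2_app1, Real.dist_eq, sq_abs]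

lemma abs_fst_le_dist (x y : EuclideanSpace ℝ (Fin 2)) : |x 0 - y 0| ≤ dist x y := by
  rw [EuclideanSpace.dist_eq, Fin.sum_univ_two]
  rw [← Real.dist_eq]
  calc dist (x 0) (y 0) = Real.sqrt (dist (x 0) (y 0) ^ 2) := by
        rw [Real.sqrt_sq dist_nonneg]
    _ ≤ _ := Real.sqrt_le_sqrt (le_add_of_nonneg_right (by positivity))

lemma compl_union_eq : (U₁ ∪ U₂)ᶜ = {p : EuclideanSpace ℝ (Fin 2) | p 0 ≤ 0} := by
  ext p
  simp only [Set.mem_compl_iff, Set.mem_union, U₁, U₂, Set.mem_setOf_eq]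
  constructor
  · intro h
    by_contra hp
    push_neg at hp
    apply h
    rcases le_or_gt (p 1) 0 with h1 | h1
    · exact Or.inr ⟨lt_of_le_of_lt h1 (by positivity), hp⟩
    · exact Or.inl ⟨lt_trans (by nlinarith) h1, hp⟩
  · intro h
    rintro (⟨_, h0⟩ | ⟨_, h0⟩) <;> linarith

/-- The family `{U₁, U₂}` is not `1`-regularly situated: no constant `C > 0` satisfies
`d(x, ℝ²∖(U₁∪U₂)) ≤ C·max(d(x, ℝ²∖U₁), d(x, ℝ²∖U₂))` for all `x`; indeed for `x = (t,0)`
with `t > 0` one has `d(x, ℝ²∖(U₁∪U₂)) = t` while `d(x, ℝ²∖Uᵢ) ≤ t²`. -/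
theorem U₁_U₂_not_one_regularly_situated :
    (¬ ∃ C > (0 : ℝ), ∀ x, infDist x (U₁ ∪ U₂)ᶜ ≤ C * max (infDist x U₁ᶜ) (infDist x U₂ᶜ)) ∧
    (∀ t : ℝ, 0 < t → infDist (pt t) (U₁ ∪ U₂)ᶜ = t ∧
      infDist (pt t) U₁ᶜ ≤ t ^ 2 ∧ infDist (pt t) U₂ᶜ ≤ t ^ 2) := by
  have key : ∀ t : ℝ, 0 < t → infDist (pt t) (U₁ ∪ U₂)ᶜ = t ∧
      infDist (pt t) U₁ᶜ ≤ t ^ 2 ∧ infDist (pt t) U₂ᶜ ≤ t ^ 2 := by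
    intro t ht
    refine ⟨?_, ?_, ?_⟩
    · rw [compl_union_eq]
      apply le_antisymm
      · have hm : pt2 0 0 ∈ {p : EuclideanSpace ℝ (Fin 2) | p 0 ≤ 0} := by
          simp [Set.mem_setOf_eq, pt2_app0]
        calc infDist (pt t) _ ≤ dist (pt t) (pt2 0 0) := infDist_le_dist_of_mem hm
          _ = t := by
            rw [pt_eq, dist_pt2]
            simp [Real.sqrt_sq ht.le]
      · refine le_of_not_gt fun hlt => ?_
        obtain ⟨y, hy, hdy⟩ := (infDist_lt_iff ⟨pt2 0 0, by simp [Set.mem_setOf_eq, pt2_app0]⟩).1 hlt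
        refine absurd hdy (not_lt.2 ?_)
        have : |t - y 0| ≤ dist (pt t) y := by
          have := abs_fst_le_dist (pt t) y
          rwa [pt_eq, pt2_app0] at this
        have hy0 : y 0 ≤ 0 := hy
        calc t ≤ |t - y 0| := by
              rw [abs_sub_comm, abs_of_nonpos (by linarith)]; linarith
          _ ≤ _ := this
    · have hm : pt2 t (-t ^ 2) ∈ U₁ᶜ := by
        simp only [Set.mem_compl_iff, U₁, Set.mem_setOf_eq, pt2_app0, pt2_app1]
        intro h
        exact absurd h.1 (lt_irrefl _)
      calc infDist (pt t) U₁ᶜ ≤ dist (pt t) (pt2 t (-t ^ 2)) := infDist_le_dist_of_mem hm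
        _ = t ^ 2 := by
          rw [pt_eq, dist_pt2]
          rw [show (0 : ℝ) - -t ^ 2 = t ^ 2 by ring]
          simp [Real.sqrt_sq (by positivity : (0:ℝ) ≤ t ^ 2)]
    · have hm : pt2 t (t ^ 2) ∈ U₂ᶜ := by
        simp only [Set.mem_compl_iff, U₂, Set.mem_setOf_eq, pt2_app0, pt2_app1]
        intro h
        exact absurd h.1 (lt_irrefl _)
      calc infDist (pt t) U₂ᶜ ≤ dist (pt t) (pt2 t (t ^ 2)) := infDist_le_dist_of_mem hm
        _ = t ^ 2 := by
          rw [pt_eq, dist_pt2]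
          rw [show (0 : ℝ) - t ^ 2 = -(t ^ 2) by ring]
          simp [Real.sqrt_sq (by positivity : (0:ℝ) ≤ t ^ 2)]
  refine ⟨?_, key⟩
  rintro ⟨C, hC, hall⟩
  set t := min 1 (1 / (2 * C)) with htdef
  have ht : 0 < t := lt_min one_pos (by positivity)
  obtain ⟨h1, h2, h3⟩ := key t ht
  have := hall (pt t)
  rw [h1] at this
  have hmax : max (infDist (pt t) U₁ᶜ) (infDist (pt t) U₂ᶜ) ≤ t ^ 2 := max_le h2 h3
  have : t ≤ C * t ^ 2 := le_trans this (by nlinarith [hmax, hC])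
  have ht2 : t ≤ 1 / (2 * C) := min_le_right _ _
  have hCt : C * t ≤ 1 / 2 := by
    have := mul_le_mul_of_nonneg_left ht2 hC.le
    have hc : C * (1 / (2 * C)) = 1 / 2 := by field_simp
    linarith
  nlinarith [ht, hCt, this]
end

section
/- In ℝ² with the Euclidean distance, the family {U₁, U₃} with U₁ = {(x₁,x₂) : x₂ > -x₁², x₁ > 0} and U₃ = {(x₁,x₂) : x₁ > -x₂², x₂ > 0} is 1-regularly situated: for all x ∈ ℝ², d(x, ℝ²\(U₁∪U₃)) ≤ √2·max(d(x, ℝ²\U₁), d(x, ℝ²\U₃)). -/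
open Metric

/-- The open set `U₃ = {x₁ > -x₂², x₂ > 0}` in `ℝ²`. -/
def U₃ : Set (EuclideanSpace ℝ (Fin 2)) := {p | -(p 1) ^ 2 < p 0 ∧ 0 < p 1}

lemma isOpen_U₁' : IsOpen U₁ := by
  have h0 : Continuous fun p : EuclideanSpace ℝ (Fin 2) => p 0 := (EuclideanSpace.proj (0 : Fin 2) : EuclideanSpace ℝ (Fin 2) →L[ℝ] ℝ).continuous
  have h1 : Continuous fun p : EuclideanSpace ℝ (Fin 2) => p 1 := (EuclideanSpace.proj (1 : Fin 2) : EuclideanSpace ℝ (Fin 2) →L[ℝ] ℝ).continuous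
  exact (isOpen_lt (by continuity) h1).inter (isOpen_lt continuous_const h0)

lemma isOpen_U₃' : IsOpen U₃ := by
  have h0 : Continuous fun p : EuclideanSpace ℝ (Fin 2) => p 0 := (EuclideanSpace.proj (0 : Fin 2) : EuclideanSpace ℝ (Fin 2) →L[ℝ] ℝ).continuous
  have h1 : Continuous fun p : EuclideanSpace ℝ (Fin 2) => p 1 := (EuclideanSpace.proj (1 : Fin 2) : EuclideanSpace ℝ (Fin 2) →L[ℝ] ℝ).continuous
  exact (isOpen_lt (by continuity) h0).inter (isOpen_lt continuous_const h1)

lemma one_le_sqrt_two : (1 : ℝ) ≤ Real.sqrt 2 := by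
  rw [show (1:ℝ) = Real.sqrt 1 from Real.sqrt_one.symm]
  exact Real.sqrt_le_sqrt one_le_two

lemma dist_sq_eq (x y : EuclideanSpace ℝ (Fin 2)) :
    dist x y ^ 2 = (x 0 - y 0) ^ 2 + (x 1 - y 1) ^ 2 := by
  rw [EuclideanSpace.dist_eq, Fin.sum_univ_two, Real.sq_sqrt (by positivity)]
  simp [Real.dist_eq, sq_abs]

/-- The family `{U₁, U₃}` is `1`-regularly situated with constant `√2`:
`d(x, ℝ²∖(U₁∪U₃)) ≤ √2 · max(d(x, ℝ²∖U₁), d(x, ℝ²∖U₃))` for all `x ∈ ℝ²`. -/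
theorem U₁_U₃_one_regularly_situated :
    ∀ x, infDist x (U₁ ∪ U₃)ᶜ ≤ Real.sqrt 2 * max (infDist x U₁ᶜ) (infDist x U₃ᶜ) := by
  intro x
  set a := infDist x U₁ᶜ with ha
  set b := infDist x U₃ᶜ with hb
  have ha0 : 0 ≤ a := infDist_nonneg
  have hb0 : 0 ≤ b := infDist_nonneg
  have hmax0 : 0 ≤ max a b := le_trans ha0 (le_max_left _ _)
  have hne1 : (U₁ᶜ : Set (EuclideanSpace ℝ (Fin 2))).Nonempty :=
    ⟨0, by simp [U₁]⟩
  have hne3 : (U₃ᶜ : Set (EuclideanSpace ℝ (Fin 2))).Nonempty :=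
    ⟨0, by simp [U₃]⟩
  obtain ⟨y, hy, hay⟩ := isOpen_U₁'.isClosed_compl.exists_infDist_eq_dist hne1 x
  obtain ⟨z, hz, hbz⟩ := isOpen_U₃'.isClosed_compl.exists_infDist_eq_dist hne3 x
  by_cases hy1 : y 1 ≤ 0
  · -- y itself is outside both U₁ and U₃
    have hyC : y ∈ (U₁ ∪ U₃)ᶜ := by
      simp only [Set.mem_compl_iff, Set.mem_union, not_or]
      refine ⟨hy, fun h => absurd h.2 (not_lt.mpr hy1)⟩
    calc infDist x (U₁ ∪ U₃)ᶜ ≤ dist x y := infDist_le_dist_of_mem hyC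
      _ = a := hay.symm
      _ ≤ max a b := le_max_left _ _
      _ ≤ Real.sqrt 2 * max a b := le_mul_of_one_le_left hmax0 one_le_sqrt_two
  by_cases hz0 : z 0 ≤ 0
  · have hzC : z ∈ (U₁ ∪ U₃)ᶜ := by
      simp only [Set.mem_compl_iff, Set.mem_union, not_or]
      refine ⟨fun h => absurd h.2 (not_lt.mpr hz0), hz⟩
    calc infDist x (U₁ ∪ U₃)ᶜ ≤ dist x z := infDist_le_dist_of_mem hzC
      _ = b := hbz.symm
      _ ≤ max a b := le_max_right _ _
      _ ≤ Real.sqrt 2 * max a b := le_mul_of_one_le_left hmax0 one_le_sqrt_two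
  push_neg at hy1 hz0
  -- Since y ∈ U₁ᶜ with y 1 > 0, we must have y 0 ≤ 0.
  have hy0 : y 0 ≤ 0 := by
    by_contra h
    push_neg at h
    exact hy ⟨lt_of_le_of_lt (by nlinarith) hy1, h⟩
  have hz1 : z 1 ≤ 0 := by
    by_contra h
    push_neg at h
    exact hz ⟨lt_of_le_of_lt (by nlinarith) hz0, h⟩
  -- The witness point (y 0, z 1) lies in the closed third quadrant.
  set w : EuclideanSpace ℝ (Fin 2) := !₂[y 0, z 1] with hw
  have hw0 : w 0 = y 0 := rfl
  have hw1 : w 1 = z 1 := rfl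
  have hwC : w ∈ (U₁ ∪ U₃)ᶜ := by
    simp only [Set.mem_compl_iff, Set.mem_union, not_or]
    constructor
    · intro h
      exact absurd (hw0 ▸ h.2) (not_lt.mpr hy0)
    · intro h
      exact absurd (hw1 ▸ h.2) (not_lt.mpr hz1)
  have h1 : (x 0 - y 0) ^ 2 ≤ a ^ 2 := by
    have := dist_sq_eq x y
    nlinarith [sq_nonneg (x 1 - y 1), hay ▸ this]
  have h2 : (x 1 - z 1) ^ 2 ≤ b ^ 2 := by
    have := dist_sq_eq x z
    nlinarith [sq_nonneg (x 0 - z 0), hbz ▸ this]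
  have hdw : dist x w ^ 2 ≤ 2 * max a b ^ 2 := by
    have := dist_sq_eq x w
    rw [hw0, hw1] at this
    have hA : a ^ 2 ≤ max a b ^ 2 := by
      have := le_max_left a b
      nlinarith
    have hB : b ^ 2 ≤ max a b ^ 2 := by
      have := le_max_right a b
      nlinarith
    nlinarith
  have hfin : dist x w ≤ Real.sqrt 2 * max a b := by
    have h2m : Real.sqrt 2 * max a b = Real.sqrt (2 * max a b ^ 2) := by
      rw [Real.sqrt_mul (by norm_num), Real.sqrt_sq hmax0]
    rw [h2m]
    have h := Real.sqrt_le_sqrt hdw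
    rwa [Real.sqrt_sq dist_nonneg] at h
  calc infDist x (U₁ ∪ U₃)ᶜ ≤ dist x w := infDist_le_dist_of_mem hwC
    _ ≤ Real.sqrt 2 * max a b := hfin
end

section
/- Transitivity of linear coverings (COV4): Let M be a metric space and U open. Suppose {Uᵢ}_{i∈I₀} is a finite family with union U that is 1-regularly situated with constant C, and for each i ∈ I₀ the finite family {Uᵢ ∩ Vⱼ}_{j∈Jᵢ} has union Uᵢ and is 1-regularly situated with constant Cᵢ, where each Vⱼ ⊆ U. Then with B = C·maxᵢ Cᵢ, for all x ∈ M: d(x, M\U) ≤ B·max_{j ∈ ⋃ᵢJᵢ} d(x, M\Vⱼ). In particular {Vⱼ}_{j∈⋃ᵢJᵢ} is 1-regularly situated with union U. -/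
open Metric

/-- COV4 (transitivity of linear coverings): if `{Uᵢ}_{i∈I₀}` covers `U` and is `1`-regularly
situated with constant `C`, and for each `i` the family `{Uᵢ ∩ Vⱼ}_{j∈Jᵢ}` covers `Uᵢ` and
is `1`-regularly situated with constant `Cᵢ`, with `Vⱼ ⊆ U`, then with `B = C · maxᵢ Cᵢ`
one has `d(x, M∖U) ≤ B · max_{j ∈ ⋃ᵢ Jᵢ} d(x, M∖Vⱼ)` for all `x`; in particular the family
`{Vⱼ}_{j ∈ ⋃ᵢ Jᵢ}` is `1`-regularly situated with union `U`. -/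
theorem linear_covering_transitivity {M : Type*} [MetricSpace M]
    {I J : Type*} [Fintype I] [Nonempty I]
    (U : Set M) (hU : IsOpen U)
    (Ui : I → Set M) (hcover : (⋃ i, Ui i) = U)
    (C : ℝ) (hC : 0 < C)
    (hreg : ∀ x, infDist x Uᶜ ≤ C * ⨆ i, infDist x (Ui i)ᶜ)
    (V : J → Set M) (hV_sub : ∀ j, V j ⊆ U)
    (Js : I → Finset J)
    (Ci : I → ℝ) (hCi : ∀ i, 0 < Ci i)
    (hcov_i : ∀ i, (⋃ j ∈ Js i, (Ui i ∩ V j)) = Ui i)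
    (hreg_i : ∀ i x, infDist x (Ui i)ᶜ ≤ Ci i * ⨆ j : Js i, infDist x (Ui i ∩ V j)ᶜ) :
    (⋃ i, ⋃ j ∈ Js i, V j) = U ∧
    ∀ x, infDist x Uᶜ ≤
      (C * ⨆ i, Ci i) * ⨆ j : {j : J // ∃ i, j ∈ Js i}, infDist x (V j)ᶜ := by
  haveI hfin : Finite {j : J // ∃ i, j ∈ Js i} := by
    have h : {j : J | ∃ i, j ∈ Js i} = ⋃ i, ↑(Js i) := by ext j; simp
    have : ({j : J | ∃ i, j ∈ Js i}).Finite := by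
      rw [h]; exact Set.finite_iUnion fun i => (Js i).finite_toSet
    exact this.to_subtype
  constructor
  · apply subset_antisymm
    · exact Set.iUnion_subset fun i => Set.iUnion₂_subset fun j _ => hV_sub j
    · intro x hx
      rw [← hcover] at hx
      obtain ⟨i, hi⟩ := Set.mem_iUnion.1 hx
      rw [← hcov_i i] at hi
      obtain ⟨j, hj, hxj⟩ := Set.mem_iUnion₂.1 hi
      exact Set.mem_iUnion.2 ⟨i, Set.mem_iUnion₂.2 ⟨j, hj, hxj.2⟩⟩
  · intro x
    set S := ⨆ j : {j : J // ∃ i, j ∈ Js i}, infDist x (V j)ᶜ with hSdef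
    have hS0 : 0 ≤ S := Real.iSup_nonneg fun j => infDist_nonneg
    have bddS : BddAbove (Set.range fun j : {j : J // ∃ i, j ∈ Js i} => infDist x (V j)ᶜ) :=
      Set.Finite.bddAbove (Set.finite_range _)
    set D := ⨆ i, Ci i with hDdef
    have bddD : BddAbove (Set.range Ci) := Set.Finite.bddAbove (Set.finite_range _)
    have hD0 : 0 ≤ D :=
      le_trans (hCi (Classical.arbitrary I)).le (le_ciSup bddD (Classical.arbitrary I))
    by_cases hUc : Uᶜ = ∅
    · rw [hUc, Metric.infDist_empty]
      exact mul_nonneg (mul_nonneg hC.le hD0) hS0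
    · have hne : Uᶜ.Nonempty := Set.nonempty_iff_ne_empty.2 hUc
      have key : ∀ i, infDist x (Ui i)ᶜ ≤ D * S := by
        intro i
        have hT : (⨆ j : Js i, infDist x (Ui i ∩ V j)ᶜ) ≤ S := by
          refine Real.iSup_le (fun j => ?_) hS0
          have hVne : (V (j : J))ᶜ.Nonempty :=
            hne.mono (Set.compl_subset_compl.2 (hV_sub j))
          have h1 : infDist x (Ui i ∩ V (j : J))ᶜ ≤ infDist x (V (j : J))ᶜ :=
            infDist_le_infDist_of_subset
              (Set.compl_subset_compl.2 Set.inter_subset_right) hVne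
          exact h1.trans (le_ciSup bddS ⟨(j : J), ⟨i, j.2⟩⟩)
        calc infDist x (Ui i)ᶜ ≤ Ci i * ⨆ j : Js i, infDist x (Ui i ∩ V j)ᶜ := hreg_i i x
          _ ≤ Ci i * S := by
              exact mul_le_mul_of_nonneg_left hT (hCi i).le
          _ ≤ D * S := mul_le_mul_of_nonneg_right (le_ciSup bddD i) hS0
      calc infDist x Uᶜ ≤ C * ⨆ i, infDist x (Ui i)ᶜ := hreg x
        _ ≤ C * (D * S) := by
            refine mul_le_mul_of_nonneg_left (Real.iSup_le key (mul_nonneg hD0 hS0)) hC.le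
        _ = (C * D) * S := by ring
end

section
/- Let M be a metric space, U open, V ⊆ U nonempty, ε > 0, 0 < δ < 1, and set ε' = (ε+δ)/(1−δ). Define V^{ε,U} = {x ∈ M : d(x,V) < ε·d(x, M\U)} and similarly V^{ε',U}. If x ∈ V^{ε,U} and y ∈ M satisfy d(x,y) < δ·d(x, M\U) or d(x,y) < δ·d(y, M\U), then d(y,V) < ε'·d(y, M\U), i.e., y ∈ V^{ε',U}. -/
open Metric

/-- If `x ∈ V^{ε,U} = {x | d(x,V) < ε·d(x, M∖U)}` and `y` satisfies
`d(x,y) < δ·d(x, M∖U)` or `d(x,y) < δ·d(y, M∖U)` with `0 < δ < 1`, then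
`d(y,V) < ε'·d(y, M∖U)` where `ε' = (ε+δ)/(1−δ)`, i.e. `y ∈ V^{ε',U}`. -/
theorem mem_enlargement_of_close {M : Type*} [MetricSpace M] (U V : Set M)
    (hU : IsOpen U) (hVU : V ⊆ U) (hV : V.Nonempty) (hUc : Uᶜ.Nonempty)
    (ε δ : ℝ) (hε : 0 < ε) (hδ0 : 0 < δ) (hδ1 : δ < 1)
    (x y : M)
    (hx : infDist x V < ε * infDist x Uᶜ)
    (hxy : dist x y < δ * infDist x Uᶜ ∨ dist x y < δ * infDist y Uᶜ) :
    infDist y V < (ε + δ) / (1 - δ) * infDist y Uᶜ := by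
  have h1 : infDist y V ≤ infDist x V + dist x y := by
    rw [dist_comm]; exact infDist_le_infDist_add_dist
  have h2 : infDist x Uᶜ ≤ infDist y Uᶜ + dist x y :=
    infDist_le_infDist_add_dist
  have h3 : (0:ℝ) ≤ dist x y := dist_nonneg
  have h4 : 0 ≤ infDist x V := infDist_nonneg
  have h5 : 0 ≤ infDist y Uᶜ := infDist_nonneg
  have hδ : 0 < 1 - δ := by linarith
  rw [div_mul_eq_mul_div, lt_div_iff₀ hδ]
  rcases hxy with h | h
  · have key : infDist y V < (ε + δ) * infDist x Uᶜ := by nlinarith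
    have hab : (1 - δ) * infDist x Uᶜ < infDist y Uᶜ := by linarith
    nlinarith [mul_lt_mul_of_pos_right key hδ,
      mul_lt_mul_of_pos_left hab (show (0:ℝ) < ε + δ by linarith)]
  · have key : infDist y V < (ε + ε * δ + δ) * infDist y Uᶜ := by
      nlinarith [mul_lt_mul_of_pos_left h hε, mul_le_mul_of_nonneg_left h2 hε.le]
    have hb : 0 < infDist y Uᶜ := by nlinarith
    nlinarith [mul_lt_mul_of_pos_right key hδ, mul_pos (mul_pos hδ0 hδ0) hb,
      mul_pos hε (mul_pos (mul_pos hδ0 hδ0) hb)]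
end

section
/- Let M be a metric space, U open, V ⊆ U nonempty, ε > 0, 0 < δ < 1, ε' = (ε+δ)/(1−δ), and define V^{ε,U}, V^{ε',U} as above. Then for any x ∈ V^{ε,U}, d(x, M\V^{ε',U}) ≥ δ·d(x, M\U). -/
open Metric

/-- For any `x ∈ V^{ε,U} = {x | d(x,V) < ε·d(x, M∖U)}`, one has
`d(x, M∖V^{ε',U}) ≥ δ·d(x, M∖U)`, where `ε' = (ε+δ)/(1−δ)` and `0 < δ < 1`. -/
theorem infDist_compl_enlargement {M : Type*} [MetricSpace M] (U V : Set M)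
    (hU : IsOpen U) (hVU : V ⊆ U) (hV : V.Nonempty) (hUc : Uᶜ.Nonempty)
    (ε δ : ℝ) (hε : 0 < ε) (hδ0 : 0 < δ) (hδ1 : δ < 1)
    (x : M) (hx : infDist x V < ε * infDist x Uᶜ) :
    δ * infDist x Uᶜ ≤
      infDist x {z | infDist z V < (ε + δ) / (1 - δ) * infDist z Uᶜ}ᶜ := by
  have h1δ : (0:ℝ) < 1 - δ := by linarith
  have hε' : 0 < (ε + δ) / (1 - δ) := div_pos (by linarith) h1δ
  set ε' : ℝ := (ε + δ) / (1 - δ) with hε'def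
  have ha : 0 < infDist x Uᶜ := by
    by_contra h
    push_neg at h
    have := infDist_nonneg (x := x) (s := V)
    nlinarith [infDist_nonneg (x := x) (s := Uᶜ)]
  -- the complement set is nonempty
  obtain ⟨z, hz⟩ := hUc
  have hzmem : z ∈ {z | infDist z V < ε' * infDist z Uᶜ}ᶜ := by
    have hz0 : infDist z Uᶜ = 0 := infDist_zero_of_mem hz
    simp only [Set.mem_compl_iff, Set.mem_setOf_eq, hz0, mul_zero, not_lt]
    exact infDist_nonneg
  by_contra hcon
  push_neg at hcon
  obtain ⟨y, hy', h⟩ := (infDist_lt_iff ⟨z, hzmem⟩).1 hcon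
  have hy : ε' * infDist y Uᶜ ≤ infDist y V := not_lt.1 hy'
  set a := infDist x Uᶜ
  set r := dist x y
  have hr0 : 0 ≤ r := dist_nonneg
  have h1 : infDist y V ≤ infDist x V + r := by
    have := infDist_le_infDist_add_dist (x := y) (y := x) (s := V)
    rwa [dist_comm y x] at this
  have h2 : a - r ≤ infDist y Uᶜ := by
    have := infDist_le_infDist_add_dist (x := x) (y := y) (s := Uᶜ)
    linarith
  have h3 : ε' * (a - r) ≤ ε' * infDist y Uᶜ :=
    mul_le_mul_of_nonneg_left h2 hε'.le
  have key : ε' * (1 - δ) = ε + δ := by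
    rw [hε'def, div_mul_cancel₀ _ h1δ.ne']
  nlinarith [h3, hy, h1, hx, h, key, infDist_nonneg (x := x) (s := V)]
end

section
/- Linear covering by enlargement: Let M be a metric space, U open, V ⊆ U nonempty, ε > 0, 0 < δ < 1, ε' = (ε+δ)/(1−δ), and V^{ε',U} = {x : d(x,V) < ε'·d(x, M\U)}. Then U = (U \ cl(V)) ∪ V^{ε',U}, and with C = min(δ, ε, 1) one has for all x ∈ M: C·d(x, M\U) ≤ max( d(x, M\(U\cl(V))), d(x, M\V^{ε',U}) ). -/
open Metric

/-- Linear covering by enlargement: for `U` open, `V ⊆ U` nonempty, `ε > 0`, `0 < δ < 1`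
and `ε' = (ε+δ)/(1−δ)`, setting `V^{ε',U} = {x | d(x,V) < ε'·d(x, M∖U)}`, one has
`U = (U ∖ cl V) ∪ V^{ε',U}` and, with `C = min(δ, ε, 1)`,
`C·d(x, M∖U) ≤ max(d(x, M∖(U∖cl V)), d(x, M∖V^{ε',U}))` for all `x ∈ M`. -/
theorem enlargement_linear_covering {M : Type*} [MetricSpace M] (U V : Set M)
    (hU : IsOpen U) (hVU : V ⊆ U) (hV : V.Nonempty) (hUc : Uᶜ.Nonempty)
    (ε δ : ℝ) (hε : 0 < ε) (hδ0 : 0 < δ) (hδ1 : δ < 1) :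
    U = (U \ closure V) ∪ {x | infDist x V < (ε + δ) / (1 - δ) * infDist x Uᶜ} ∧
    ∀ x, min δ (min ε 1) * infDist x Uᶜ ≤
      max (infDist x (U \ closure V)ᶜ)
        (infDist x {z | infDist z V < (ε + δ) / (1 - δ) * infDist z Uᶜ}ᶜ) := by
  have h1δ : (0:ℝ) < 1 - δ := by linarith
  set ε' : ℝ := (ε + δ) / (1 - δ) with hε'def
  have hε' : 0 < ε' := div_pos (by linarith) h1δ
  have hε'mul : ε' * (1 - δ) = ε + δ := div_mul_cancel₀ _ (ne_of_gt h1δ)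
  set W : Set M := {x | infDist x V < ε' * infDist x Uᶜ} with hWdef
  -- every point of U has positive distance to Uᶜ
  have hposU : ∀ x ∈ U, 0 < infDist x Uᶜ := by
    intro x hx
    rcases lt_or_eq_of_le (infDist_nonneg (s := Uᶜ) (x := x)) with h | h
    · exact h
    · exact absurd ((hU.isClosed_compl.mem_iff_infDist_zero hUc).mpr h.symm) (by simpa)
  -- W ⊆ U
  have hWU : W ⊆ U := by
    intro x hx
    have hx' : infDist x V < ε' * infDist x Uᶜ := hx
    have h0 : 0 < infDist x Uᶜ := by
      by_contra h
      have h0 : infDist x Uᶜ = 0 := le_antisymm (not_lt.mp h) infDist_nonneg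
      rw [h0, mul_zero] at hx'
      exact absurd hx' (not_lt.mpr infDist_nonneg)
    by_contra hxU
    have := (hU.isClosed_compl.mem_iff_infDist_zero hUc).mp (by simpa using hxU)
    linarith
  -- Uᶜ ⊆ Wᶜ, so Wᶜ is nonempty
  have hUcWc : Uᶜ ⊆ Wᶜ := fun y hy => fun hyW => hy (hWU hyW)
  have hWc : (Wᶜ : Set M).Nonempty := hUc.mono hUcWc
  constructor
  · apply Set.eq_of_subset_of_subset
    · intro x hx
      by_cases hc : x ∈ closure V
      · right
        have h0 : infDist x V = 0 := (mem_closure_iff_infDist_zero hV).mp hc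
        show infDist x V < ε' * infDist x Uᶜ
        rw [h0]
        exact mul_pos hε' (hposU x hx)
      · exact Or.inl ⟨hx, hc⟩
    · rintro x (hx | hx)
      · exact hx.1
      · exact hWU hx
  · intro x
    set a := infDist x Uᶜ with hadef
    have ha : 0 ≤ a := infDist_nonneg
    set C : ℝ := min δ (min ε 1) with hCdef
    have hCδ : C ≤ δ := min_le_left _ _
    have hCε : C ≤ ε := le_trans (min_le_right _ _) (min_le_left _ _)
    have hC1 : C ≤ 1 := le_trans (min_le_right _ _) (min_le_right _ _)
    have hC0 : 0 ≤ C := le_min hδ0.le (le_min hε.le zero_le_one)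
    by_cases hcase : infDist x V < ε * a
    · -- x ∈ V^{ε,U}: use distance to Wᶜ
      refine le_max_of_le_right ?_
      have key : δ * a ≤ infDist x Wᶜ := by
        by_contra h
        rcases (infDist_lt_iff hWc).mp (not_le.mp h) with ⟨y, hyWc, hy⟩
        apply hyWc
        show infDist y V < ε' * infDist y Uᶜ
        have h1 : infDist y V ≤ infDist x V + dist y x := infDist_le_infDist_add_dist
        have h2 : a ≤ infDist y Uᶜ + dist x y := infDist_le_infDist_add_dist
        have h3 : ε' * (a - dist x y) ≤ ε' * infDist y Uᶜ :=
          mul_le_mul_of_nonneg_left (by linarith) hε'.le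
        have h4 : ε' * dist x y < ε' * (δ * a) := by
          exact mul_lt_mul_of_pos_left hy hε'
        have hdyx : dist y x = dist x y := dist_comm y x
        nlinarith
      calc C * a ≤ δ * a := mul_le_mul_of_nonneg_right hCδ ha
        _ ≤ infDist x Wᶜ := key
    · -- d(x,V) ≥ ε a: use distance to (U \ closure V)ᶜ
      refine le_max_of_le_left ?_
      have hne : ((U \ closure V)ᶜ : Set M).Nonempty :=
        hUc.mono (fun y (hy : y ∉ U) (hyd : y ∈ U \ closure V) => hy hyd.1)
      by_contra h
      rcases (infDist_lt_iff hne).mp (not_le.mp h) with ⟨y, hy, hxy⟩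
      have hy' : y ∉ U ∨ y ∈ closure V := by
        by_cases hyU : y ∈ U
        · right
          by_contra hyc
          exact hy ⟨hyU, hyc⟩
        · exact Or.inl hyU
      rcases hy' with hy' | hy'
      · have : a ≤ dist x y := infDist_le_dist_of_mem hy'
        nlinarith
      · have h1 : infDist x (closure V) ≤ dist x y := infDist_le_dist_of_mem hy'
        rw [infDist_closure] at h1
        have h2 : ε * a ≤ infDist x V := not_lt.mp hcase
        nlinarith
end

section
/- Separation of enlargements: Let M be a metric space, U₁, U₂ open with U = U₁ ∪ U₂. For ε > 0 define U₁ᵋ = {x ∈ U₁ : d(x, U₁\U₂) < ε·d(x, M\U₁)} and U₂^{ε'} = {x ∈ U₂ : d(x, U₂\U₁) < ε'·d(x, M\U₂)}. If ε·ε' < 1, then cl(U₁ᵋ) ∩ cl(U₂^{ε'}) ∩ U = ∅. -/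
open Metric

/-- Separation of enlargements: for `U₁, U₂` open with `U = U₁ ∪ U₂`, set
`U₁ᵋ = {x ∈ U₁ | d(x, U₁∖U₂) < ε·d(x, M∖U₁)}` and
`U₂^{ε'} = {x ∈ U₂ | d(x, U₂∖U₁) < ε'·d(x, M∖U₂)}`. If `ε·ε' < 1` then
`cl(U₁ᵋ) ∩ cl(U₂^{ε'}) ∩ U = ∅`. -/
theorem enlargements_separated {M : Type*} [MetricSpace M] (U₁ U₂ : Set M)
    (h₁ : IsOpen U₁) (h₂ : IsOpen U₂)
    (hd₁ : (U₁ \ U₂).Nonempty) (hd₂ : (U₂ \ U₁).Nonempty)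
    (ε ε' : ℝ) (hε : 0 < ε) (hε' : 0 < ε') (hεε' : ε * ε' < 1) :
    closure {x ∈ U₁ | infDist x (U₁ \ U₂) < ε * infDist x U₁ᶜ} ∩
      closure {x ∈ U₂ | infDist x (U₂ \ U₁) < ε' * infDist x U₂ᶜ} ∩
      (U₁ ∪ U₂) = ∅ := by
  have hc1 : closure {x ∈ U₁ | infDist x (U₁ \ U₂) < ε * infDist x U₁ᶜ} ⊆
      {x | infDist x (U₁ \ U₂) ≤ ε * infDist x U₁ᶜ} :=
    closure_minimal (fun x hx => le_of_lt hx.2)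
      (isClosed_le (continuous_infDist_pt _) (continuous_const.mul (continuous_infDist_pt _)))
  have hc2 : closure {x ∈ U₂ | infDist x (U₂ \ U₁) < ε' * infDist x U₂ᶜ} ⊆
      {x | infDist x (U₂ \ U₁) ≤ ε' * infDist x U₂ᶜ} :=
    closure_minimal (fun x hx => le_of_lt hx.2)
      (isClosed_le (continuous_infDist_pt _) (continuous_const.mul (continuous_infDist_pt _)))
  ext x
  simp only [Set.mem_inter_iff, Set.mem_empty_iff_false, iff_false, not_and]
  rintro ⟨hx1, hx2⟩ hxU
  have h1 : infDist x (U₁ \ U₂) ≤ ε * infDist x U₁ᶜ := hc1 hx1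
  have h2 : infDist x (U₂ \ U₁) ≤ ε' * infDist x U₂ᶜ := hc2 hx2
  have hs1 : infDist x U₂ᶜ ≤ infDist x (U₁ \ U₂) :=
    infDist_le_infDist_of_subset (fun y hy => hy.2) hd₁
  have hs2 : infDist x U₁ᶜ ≤ infDist x (U₂ \ U₁) :=
    infDist_le_infDist_of_subset (fun y hy => hy.2) hd₂
  have ha0 : 0 ≤ infDist x U₁ᶜ := infDist_nonneg
  have hb0 : 0 ≤ infDist x U₂ᶜ := infDist_nonneg
  have hb : infDist x U₂ᶜ = 0 := by nlinarith
  have ha : infDist x U₁ᶜ = 0 := by nlinarith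
  rcases hxU with hx | hx
  · have hne : (U₁ᶜ : Set M).Nonempty := ⟨hd₂.choose, hd₂.choose_spec.2⟩
    have : 0 < infDist x U₁ᶜ :=
      (h₁.isClosed_compl.notMem_iff_infDist_pos hne).mp (fun h => h hx)
    linarith
  · have hne : (U₂ᶜ : Set M).Nonempty := ⟨hd₁.choose, hd₁.choose_spec.2⟩
    have : 0 < infDist x U₂ᶜ :=
      (h₂.isClosed_compl.notMem_iff_infDist_pos hne).mp (fun h => h hx)
    linarith
end

section
/- Let V be a finite-dimensional real normed vector space and γ ⊆ V a proper closed convex cone with nonempty interior. Then for any open subset U ⊆ V, the open set U + γ has Lipschitz boundary; more precisely (in suitable coordinates where γ ⊇ γ₀ = {(x', xₙ) : xₙ > ‖x'‖} near a boundary point), the boundary of U + γ is locally the graph of a 1-Lipschitz function φ: ℝ^{n-1} → ℝ, with U + γ = {(x', xₙ) : xₙ > φ(x')} locally. -/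
open Pointwise

/-- Let `γ` be a proper closed convex cone with nonempty interior in `ℝⁿ = ℝ^{n-1} × ℝ`,
in coordinates chosen so that `γ` contains the open cone `γ₀ = {(x', t) | t > ‖x'‖}`.
Then for any open `U`, near any boundary point the open set `U + γ` is the strict epigraph
of a `1`-Lipschitz function `φ : ℝ^{n-1} → ℝ`; in fact
`U + γ = {(x', t) | t > φ(x')}` globally. In particular `U + γ` has Lipschitz boundary. -/
theorem add_cone_lipschitz_boundary (m : ℕ)
    (γ U : Set (EuclideanSpace ℝ (Fin m) × ℝ))
    (hγ_closed : IsClosed γ) (hγ_convex : Convex ℝ γ)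
    (hγ_cone : ∀ c : ℝ, 0 < c → ∀ q ∈ γ, c • q ∈ γ)
    (hγ_proper : γ ∩ (-γ) ⊆ {0})
    (hγ₀ : {q : EuclideanSpace ℝ (Fin m) × ℝ | ‖q.1‖ < q.2} ⊆ γ)
    (hU : IsOpen U)
    (p : EuclideanSpace ℝ (Fin m) × ℝ) (hp : p ∈ frontier (U + γ)) :
    ∃ φ : EuclideanSpace ℝ (Fin m) → ℝ, LipschitzWith 1 φ ∧
      U + γ = {q : EuclideanSpace ℝ (Fin m) × ℝ | φ q.1 < q.2} := by
  set W : Set (EuclideanSpace ℝ (Fin m) × ℝ) := U + γ with hW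
  -- γ is closed under addition
  have hγ_add : ∀ g ∈ γ, ∀ g' ∈ γ, g + g' ∈ γ := by
    intro g hg g' hg'
    have h2 : ((1:ℝ)/2) • g + ((1:ℝ)/2) • g' ∈ γ :=
      hγ_convex hg hg' (by norm_num) (by norm_num) (by norm_num)
    have := hγ_cone 2 (by norm_num) _ h2
    have heq : (2:ℝ) • (((1:ℝ)/2) • g + ((1:ℝ)/2) • g') = g + g' := by
      rw [smul_add, smul_smul, smul_smul]; norm_num
    rwa [heq] at this
  -- W absorbs γ
  have hWγ : ∀ q ∈ W, ∀ g ∈ γ, q + g ∈ W := by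
    intro q hq g hg
    rw [hW, Set.mem_add] at hq
    obtain ⟨u, hu, g0, hg0, rfl⟩ := hq
    exact ⟨u, hu, g0 + g, hγ_add g0 hg0 g hg, (add_assoc u g0 g).symm⟩
  -- the open cone γ₀ sits inside γ; key step lemma
  have hstep : ∀ q ∈ W, ∀ x' : EuclideanSpace ℝ (Fin m), ∀ t : ℝ,
      ‖x' - q.1‖ < t - q.2 → (x', t) ∈ W := by
    intro q hq x' t h
    have hg : (x' - q.1, t - q.2) ∈ γ := hγ₀ h
    have hmem := hWγ q hq _ hg
    have heq : q + (x' - q.1, t - q.2) = (x', t) := by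
      obtain ⟨q1, q2⟩ := q
      simp [Prod.mk_add_mk]
    rwa [heq] at hmem
  -- W is open
  have hWopen : IsOpen W := hU.add_right
  have hpnW : p ∉ W := by
    intro h
    rw [← hWopen.interior_eq] at h
    exact hp.2 h
  -- lower bound for sections
  have hlow : ∀ q ∈ W, p.2 - ‖q.1 - p.1‖ ≤ q.2 := by
    intro q hq
    by_contra h
    push_neg at h
    apply hpnW
    have : (p.1, p.2) ∈ W := by
      apply hstep q hq
      have : ‖q.1 - p.1‖ < p.2 - q.2 := by linarith
      rw [← norm_neg] at this; simpa using this
    simpa using this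
  -- W is nonempty
  obtain ⟨a, ha⟩ : W.Nonempty := by
    rcases Set.eq_empty_or_nonempty W with h | h
    · exfalso
      have hp' : p ∈ frontier W := hp
      rw [h] at hp'
      simp [frontier] at hp'
    · exact h
  -- sections
  set S : EuclideanSpace ℝ (Fin m) → Set ℝ := fun x' => {t | (x', t) ∈ W} with hS
  have hSne : ∀ x', (S x').Nonempty := by
    intro x'
    refine ⟨a.2 + ‖x' - a.1‖ + 1, ?_⟩
    exact hstep a ha x' _ (by linarith)
  have hSbdd : ∀ x', BddBelow (S x') := by
    intro x'
    exact ⟨p.2 - ‖x' - p.1‖, fun t ht => hlow (x', t) ht⟩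
  set φ : EuclideanSpace ℝ (Fin m) → ℝ := fun x' => sInf (S x') with hφ
  -- upward closure of sections
  have hup : ∀ x' : EuclideanSpace ℝ (Fin m), ∀ s ∈ S x', ∀ t, s < t → t ∈ S x' := by
    intro x' s hs t hst
    exact hstep (x', s) hs x' t (by simpa using hst)
  -- one-sided Lipschitz estimate
  have hLip1 : ∀ x y : EuclideanSpace ℝ (Fin m), φ x ≤ φ y + ‖x - y‖ := by
    intro x y
    have : ∀ s ∈ S y, φ x ≤ s + ‖x - y‖ := by
      intro s hs
      refine le_of_forall_pos_le_add fun ε hε => ?_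
      have hmem : s + ‖x - y‖ + ε ∈ S x :=
        hstep (y, s) hs x _ (by simp; linarith)
      have := csInf_le (hSbdd x) hmem
      linarith [this]
    have : φ x - ‖x - y‖ ≤ sInf (S y) :=
      le_csInf (hSne y) (fun s hs => by linarith [this s hs])
    simp only [hφ]; linarith
  have hLip : LipschitzWith 1 φ := by
    apply LipschitzWith.of_dist_le_mul
    intro x y
    rw [Real.dist_eq, NNReal.coe_one, one_mul, dist_eq_norm, abs_sub_le_iff]
    constructor
    · linarith [hLip1 x y]
    · have := hLip1 y x
      rw [← norm_neg, neg_sub] at this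
      linarith
  refine ⟨φ, hLip, ?_⟩
  ext q
  constructor
  · intro hq
    obtain ⟨ε, hε, hball⟩ := Metric.isOpen_iff.mp hWopen q hq
    have hmem : (q.1, q.2 - ε/2) ∈ W := by
      apply hball
      rw [Metric.mem_ball, Prod.dist_eq]
      have h1 : dist (q.1, q.2 - ε/2).1 q.1 = 0 := dist_self _
      have h2 : dist (q.1, q.2 - ε/2).2 q.2 = ε/2 := by
        show dist (q.2 - ε/2) q.2 = ε/2
        rw [Real.dist_eq, show q.2 - ε/2 - q.2 = -(ε/2) by ring, abs_neg,
          abs_of_pos (by linarith)]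
      rw [h1, h2, max_eq_right (by linarith)]
      linarith
    have : φ q.1 ≤ q.2 - ε/2 := csInf_le (hSbdd q.1) hmem
    show φ q.1 < q.2
    linarith
  · intro hq
    obtain ⟨s, hs, hsq⟩ := exists_lt_of_csInf_lt (hSne q.1) hq
    have := hup q.1 s hs q.2 hsq
    exact this
end
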